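/- If G is a nontrivial finite nilpotent group with the Strong Magnus Property, then G is a 2-group, i.e., the order of G is a power of 2. -/

import Mathlib

/-- A group has the Strong Magnus Property if any two elements with the same
normal closure are conjugate. -/
def StrongMagnusProperty (G : Type*) [Group G] : Prop :=
  ∀ x y : G, Subgroup.normalClosure {x} = Subgroup.normalClosure {y} →
    IsConj x y

theorem finite_nilpotent_SMP_is_two_group (G : Type*) [Group G] [Finite G] [Nontrivial G]
    (hnilp : Group.IsNilpotent G) (hG : StrongMagnusProperty G) :
    ∃ n : ℕ, Nat.card G = 2 ^ n := by
  have hcard : Nat.card G ≠ 0 := Nat.card_pos.ne'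
  -- It suffices to show every prime dividing |G| is 2.
  suffices h2 : ∀ {p : ℕ}, p.Prime → p ∣ Nat.card G → p = 2 by
    exact ⟨(Nat.card G).primeFactorsList.length,
      Nat.eq_prime_pow_of_unique_prime_dvd hcard h2⟩
  intro p hp hdvd
  by_contra hp2
  -- p is odd
  have hodd : Odd p := hp.odd_of_ne_two hp2
  -- get an element of order p
  haveI : Fact p.Prime := ⟨hp⟩
  obtain ⟨x, hx⟩ := exists_prime_orderOf_dvd_card' (G := G) p hdvd
  -- x and x^2 have the same normal closure
  have hsame : Subgroup.normalClosure {x} = Subgroup.normalClosure {x ^ 2} := by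
    apply le_antisymm
    · apply Subgroup.normalClosure_le_normal
      rw [Set.singleton_subset_iff]
      have hxmem : x ^ 2 ∈ Subgroup.normalClosure {x ^ 2} :=
        Subgroup.subset_normalClosure rfl
      have key : (x ^ 2) ^ ((p + 1) / 2) = x := by
        rw [← pow_mul, Nat.mul_div_cancel' hodd.add_one.two_dvd, pow_succ, ← hx,
          pow_orderOf_eq_one, one_mul]
      have hm := pow_mem hxmem ((p + 1) / 2)
      rwa [key] at hm
    · apply Subgroup.normalClosure_le_normal
      rw [Set.singleton_subset_iff]
      exact pow_mem (Subgroup.subset_normalClosure (Set.mem_singleton x)) 2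
  -- SMP: x is conjugate to x^2
  obtain ⟨c, hc⟩ := hG x (x ^ 2) hsame
  -- hc : SemiconjBy ↑c x (x^2), i.e. c * x = x^2 * c
  set u : G := (c : G) with hu
  have hrel : u * x * u⁻¹ = x ^ 2 := by
    have h := hc.eq
    rw [h]; group
  -- key : ⁅x, c⁆ = x⁻¹
  have hcom : x * u * x⁻¹ * u⁻¹ = x⁻¹ := by
    have h1 : u * x⁻¹ * u⁻¹ = (x ^ 2)⁻¹ := by
      rw [← hrel]; group
    calc x * u * x⁻¹ * u⁻¹ = x * (u * x⁻¹ * u⁻¹) := by group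
    _ = x * (x ^ 2)⁻¹ := by rw [h1]
    _ = x⁻¹ := by group
  -- x lies in every term of the lower central series
  have hmem : ∀ n, x ∈ (⊤ : Subgroup G).lowerCentralSeries n := by
    intro n
    induction n with
    | zero => exact Subgroup.mem_top x
    | succ n ih =>
      have : x * u * x⁻¹ * u⁻¹ ∈ (⊤ : Subgroup G).lowerCentralSeries (n + 1) := by
        rw [Subgroup.mem_lowerCentralSeries_succ_iff]
        exact Subgroup.subset_closure ⟨x, ih, u, Subgroup.mem_top u, rfl⟩
      rw [hcom] at this
      exact (inv_mem_iff).mp this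
  -- nilpotency: lower central series reaches ⊥
  obtain ⟨n, hn⟩ := nilpotent_iff_lowerCentralSeries.mp hnilp
  have hx1 : x = 1 := by
    have := hmem n
    rw [hn] at this
    simpa using this
  rw [hx1, orderOf_one] at hx
  exact hp.one_lt.ne' hx.symm
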